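/- Let G be the m×n rectangle grid graph and let G' be G with an extra edge e between E = (x_E, y_E) and F = (x_F, y_F) with d_G(E,F) ≥ 2. For any two vertices A, B, if Gain(A,B) > 0 then Gain(A,B) has the same parity as Gain = |y_F − y_E| + |x_E − x_F| − 1 and as Gain' = ||y_F − y_E| − |x_E − x_F|| − 1. -/

import Mathlib

/-- A set `R` of vertices resolves the graph `H` if every pair of distinct
vertices is distinguished by some vertex of `R`. -/
def resolves {V : Type*} (H : SimpleGraph V) (R : Set V) : Prop :=
  ∀ a b : V, a ≠ b → ∃ x ∈ R, H.dist a x ≠ H.dist b x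

/-- The metric dimension: the least cardinality of a (finite) resolving set. -/
noncomputable def metricDim {V : Type*} (H : SimpleGraph V) : ℕ :=
  sInf {k | ∃ R : Finset V, R.card = k ∧ resolves H (R : Set V)}

/-- The rectangle grid graph with `n` columns and `m` rows: the vertex `(i, j)`
(with `i : Fin n`, `j : Fin m`) represents the grid point in column `i + 1` and row
`j + 1`; two vertices are adjacent when they differ by exactly 1 in exactly one
coordinate, i.e. when their ℓ¹ distance is 1. -/
def grid2 (n m : ℕ) : SimpleGraph (Fin n × Fin m) where
  Adj a b := |((a.1 : ℕ) : ℤ) - ((b.1 : ℕ) : ℤ)| + |((a.2 : ℕ) : ℤ) - ((b.2 : ℕ) : ℤ)| = 1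
  symm := by
    constructor
    intro a b h
    rw [abs_sub_comm ((b.1 : ℕ) : ℤ), abs_sub_comm ((b.2 : ℕ) : ℤ)]
    exact h
  loopless := by constructor; intro a h; simp at h

/-- The gain of the pair `(A,B)`: the decrease in distance due to the extra edge. -/
noncomputable def gain {V : Type*} (G G' : SimpleGraph V) (A B : V) : ℤ :=
  (G.dist A B : ℤ) - (G'.dist A B : ℤ)

/-- Claim 9 (parity): on the `m × n` grid with extra edge `e = (E,F)` with
`d_G(E,F) ≥ 2`, for any two vertices `A`, `B`, if `Gain(A,B) > 0` then `Gain(A,B)`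
has the same parity as `Gain = |y_F − y_E| + |x_E − x_F| − 1` and as
`Gain' = ||y_F − y_E| − |x_E − x_F|| − 1`. -/
lemma abs_cast_zmod2 (t : ℤ) : ((|t| : ℤ) : ZMod 2) = (t : ZMod 2) := by
  rcases abs_choice t with h | h
  · rw [h]
  · rw [h]; push_cast; ring_nf; exact (CharTwo.neg_eq _)

def fpar {n m : ℕ} (v : Fin n × Fin m) : ZMod 2 :=
  ((v.1 : ℕ) : ZMod 2) + ((v.2 : ℕ) : ZMod 2)

lemma grid_adj_par {n m : ℕ} {a b : Fin n × Fin m} (h : (grid2 n m).Adj a b) :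
    fpar a + fpar b = 1 := by
  have h' : |((a.1 : ℕ) : ℤ) - ((b.1 : ℕ) : ℤ)| + |((a.2 : ℕ) : ℤ) - ((b.2 : ℕ) : ℤ)| = 1 := h
  have h2 := congrArg (fun t : ℤ => (t : ZMod 2)) h'
  simp only [Int.cast_add, Int.cast_one, abs_cast_zmod2, Int.cast_sub, Int.cast_natCast] at h2
  have htwo : (2 : ZMod 2) = 0 := by decide
  unfold fpar
  linear_combination h2 + (((b.1 : ℕ) : ZMod 2) + ((b.2 : ℕ) : ZMod 2)) * htwo

lemma grid_walk_par {n m : ℕ} {a b : Fin n × Fin m} (w : (grid2 n m).Walk a b) :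
    (w.length : ZMod 2) = fpar a + fpar b := by
  induction w with
  | nil => simp [CharTwo.add_self_eq_zero]
  | @cons a c b h w ih =>
      rw [SimpleGraph.Walk.length_cons]
      push_cast
      rw [ih]
      have htwo : (2 : ZMod 2) = 0 := by decide
      linear_combination grid_adj_par h + (1 - fpar a) * htwo

lemma Gwalk_par {n m : ℕ} (E F : Fin n × Fin m)
    (G' : SimpleGraph (Fin n × Fin m))
    (hG' : G' = grid2 n m ⊔ SimpleGraph.fromEdgeSet {s(E, F)})
    {a b : Fin n × Fin m} (w : G'.Walk a b) :
    (w.length : ZMod 2) = fpar a + fpar b +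
      (w.edges.count s(E, F)) * (fpar E + fpar F + 1) := by
  induction w with
  | nil => simp [CharTwo.add_self_eq_zero]
  | @cons a c b h w ih =>
      rw [SimpleGraph.Walk.length_cons, SimpleGraph.Walk.edges_cons]
      have htwo : (2 : ZMod 2) = 0 := by decide
      by_cases he : s(a, c) = s(E, F)
      · rw [he, List.count_cons_self]
        have hac : fpar a + fpar c = fpar E + fpar F := by
          rw [Sym2.eq_iff] at he
          rcases he with ⟨h1, h2⟩ | ⟨h1, h2⟩ <;> subst h1 <;> subst h2 <;> ring
        push_cast
        rw [ih]
        have hz : ∀ x : ZMod 2, x + x = 0 := fun x => CharTwo.add_self_eq_zero x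
        linear_combination hac + (- fpar a) * htwo
      · rw [List.count_cons_of_ne he]
        have hadj : (grid2 n m).Adj a c := by
          rw [hG'] at h
          rcases h with h | h
          · exact h
          · exact absurd (by simpa using h.1) he
        push_cast
        rw [ih]
        linear_combination grid_adj_par hadj + (1 - fpar a) * htwo

lemma zmod2_of_emod (a b : ℤ) (h : (a : ZMod 2) = (b : ZMod 2)) : a % 2 = b % 2 := by
  have := (ZMod.intCast_eq_intCast_iff a b 2).mp h
  simpa [Int.ModEq] using this


theorem stmt_15 {m n : ℕ}
    (E F : Fin n × Fin m)
    (hdist : 2 ≤ (grid2 n m).dist E F)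
    (G' : SimpleGraph (Fin n × Fin m))
    (hG' : G' = grid2 n m ⊔ SimpleGraph.fromEdgeSet {s(E, F)})
    (A B : Fin n × Fin m) (hpos : 0 < gain (grid2 n m) G' A B) :
    gain (grid2 n m) G' A B % 2 =
      (|((F.2 : ℕ) : ℤ) - ((E.2 : ℕ) : ℤ)| + |((E.1 : ℕ) : ℤ) - ((F.1 : ℕ) : ℤ)| - 1) % 2 ∧
    gain (grid2 n m) G' A B % 2 =
      (|(|((F.2 : ℕ) : ℤ) - ((E.2 : ℕ) : ℤ)|) - (|((E.1 : ℕ) : ℤ) - ((F.1 : ℕ) : ℤ)|)| - 1) % 2 := by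
  have htwo : (2 : ZMod 2) = 0 := by decide
  have hle : grid2 n m ≤ G' := by rw [hG']; exact le_sup_left
  unfold gain at hpos ⊢
  have hd' : (G'.dist A B : ℤ) < (grid2 n m).dist A B := by omega
  have hr : (grid2 n m).Reachable A B := by
    by_contra hnr
    rw [SimpleGraph.dist_eq_zero_of_not_reachable hnr] at hd'
    omega
  have hr' : G'.Reachable A B := hr.mono hle
  obtain ⟨w, hw⟩ := hr'.exists_walk_length_eq_dist
  set q := w.bypass with hqdef
  have hqp : q.IsPath := SimpleGraph.Walk.bypass_isPath w
  have hql : q.length = G'.dist A B :=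
    le_antisymm (hw ▸ SimpleGraph.Walk.length_bypass_le w) (SimpleGraph.dist_le q)
  have hk1 : q.edges.count s(E, F) ≤ 1 :=
    List.nodup_iff_count_le_one.mp hqp.isTrail.edges_nodup _
  have hk0 : q.edges.count s(E, F) ≠ 0 := by
    intro h0
    have hnot : s(E, F) ∉ q.edges := by
      rw [← List.count_eq_zero]; exact h0
    have hsub : ∀ e ∈ q.edges, e ∈ (grid2 n m).edgeSet := by
      intro e he
      have hmem := q.edges_subset_edgeSet he
      rw [hG', SimpleGraph.edgeSet_sup] at hmem
      rcases hmem with h | h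
      · exact h
      · exfalso
        rw [SimpleGraph.edgeSet_fromEdgeSet] at h
        have : e = s(E, F) := by simpa using h.1
        exact hnot (this ▸ he)
    have : (grid2 n m).dist A B ≤ (q.transfer (grid2 n m) hsub).length :=
      SimpleGraph.dist_le _
    rw [SimpleGraph.Walk.length_transfer, hql] at this
    omega
  have hk : q.edges.count s(E, F) = 1 := by omega
  have hpq := Gwalk_par E F G' hG' q
  rw [hql, hk] at hpq
  obtain ⟨wg, hwg⟩ := hr.exists_walk_length_eq_dist
  have hpg := grid_walk_par wg
  rw [hwg] at hpg
  have hgain : (((grid2 n m).dist A B : ZMod 2)) - ((G'.dist A B : ZMod 2))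
      = fpar E + fpar F + 1 := by
    rw [hpg, hpq]
    linear_combination (-1 - fpar E - fpar F) * htwo
  have habs : ∀ s t : ℤ, ((|s| + |t| - 1 : ℤ) : ZMod 2) = ((s : ZMod 2) + t + 1) := by
    intro s t
    push_cast [abs_cast_zmod2]
    linear_combination (-1 : ZMod 2) * htwo
  have habs2 : ∀ s t : ℤ, ((|(|s| - |t|)| - 1 : ℤ) : ZMod 2) = ((s : ZMod 2) + t + 1) := by
    intro s t
    rw [Int.cast_sub, abs_cast_zmod2, Int.cast_sub, abs_cast_zmod2, abs_cast_zmod2]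
    push_cast
    linear_combination (-1 - (t : ZMod 2)) * htwo
  constructor
  · apply zmod2_of_emod
    rw [habs]
    push_cast
    rw [hgain]
    unfold fpar
    linear_combination (((E.2 : ℕ) : ZMod 2) + ((F.1 : ℕ) : ZMod 2)) * htwo
  · apply zmod2_of_emod
    rw [habs2]
    push_cast
    rw [hgain]
    unfold fpar
    linear_combination (((E.2 : ℕ) : ZMod 2) + ((F.1 : ℕ) : ZMod 2)) * htwo
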